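/- Let α be a non-principal ultrafilter on ℕ and f : ℕ → ℕ. The following statements are equivalent: (i) f is α-finite-to-one; (ii) g ≪ f for some α-injective g : ℕ → ℕ; (iii) there exist an α-injective g : ℕ → ℕ and h : ℕ → ℕ such that g ≤ h ∘ f pointwise; (iv) there exist an α-injective g : ℕ → ℕ and a strictly increasing h : ℕ → ℕ such that g⁻¹([h(n),∞)) ⊆ f⁻¹([n,∞)) for every n ∈ ℕ. -/

import Mathlib

/-- `f` is `α`-injective: the restriction of `f` to some `A ∈ α` is injective. -/
def AlphaInjective (α : Ultrafilter ℕ) (f : ℕ → ℕ) : Prop :=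
  ∃ A ∈ α, Set.InjOn f A

/-- `f` is `α`-finite-to-one: the restriction of `f` to some `A ∈ α` is finite-to-one,
i.e. every fiber of `f` restricted to `A` is finite. -/
def AlphaFiniteToOne (α : Ultrafilter ℕ) (f : ℕ → ℕ) : Prop :=
  ∃ A ∈ α, ∀ k : ℕ, (A ∩ f ⁻¹' {k}).Finite

/-- `g ≪ f` : `g ≤ h ∘ f` pointwise for some strictly increasing `h : ℕ → ℕ`. -/
def LL (g f : ℕ → ℕ) : Prop :=
  ∃ h : ℕ → ℕ, StrictMono h ∧ ∀ i, g i ≤ h (f i)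

/-- From finite fibers on `A`, build a function injective on `A` dominated by a
strictly increasing function of `f`. -/
lemma aux_one_two {A : Set ℕ} {f : ℕ → ℕ} (hA : ∀ k, (A ∩ f ⁻¹' {k}).Finite) :
    ∃ g : ℕ → ℕ, Set.InjOn g A ∧ LL g f := by
  classical
  set F : ℕ → Finset ℕ := fun k => (hA k).toFinset with hF
  set C : ℕ → ℕ := fun k => (F k).card with hCdef
  set S : ℕ → ℕ := fun k => ∑ j ∈ Finset.range k, C j with hSdef
  set r : ℕ → ℕ := fun i => ((F (f i)).filter (fun j => j < i)).card with hrdef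
  have hmemF : ∀ i ∈ A, i ∈ F (f i) := by
    intro i hi
    exact (Set.Finite.mem_toFinset _).mpr ⟨hi, rfl⟩
  have hsucc : ∀ k, S (k + 1) = S k + C k := by
    intro k; simp [hSdef, Finset.sum_range_succ]
  have hSmono : Monotone S := by
    apply monotone_nat_of_le_succ
    intro k
    rw [hsucc]
    omega
  have hrC : ∀ i, r i ≤ C (f i) := fun i => Finset.card_filter_le _ _
  have hrlt : ∀ i ∈ A, r i < C (f i) := by
    intro i hi
    apply Finset.card_lt_card
    rw [Finset.ssubset_iff_of_subset (Finset.filter_subset _ _)]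
    exact ⟨i, hmemF i hi, by simp⟩
  have hrkey : ∀ a b, a ∈ A → f a = f b → a < b → r a < r b := by
    intro a b ha hfab hab
    have hsub : (F (f a)).filter (fun j => j < a) ⊂ (F (f a)).filter (fun j => j < b) := by
      rw [Finset.ssubset_iff_of_subset
        (Finset.monotone_filter_right _ (fun j _ (hj : j < a) => hj.trans hab))]
      exact ⟨a, by simp [Finset.mem_filter, hmemF a ha, hab], by simp⟩
    have := Finset.card_lt_card hsub
    simpa [hrdef, hfab] using this
  refine ⟨fun i => S (f i) + r i, ?_, fun k => S (k + 1) + k, ?_, ?_⟩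
  · intro i hi i' hi' he
    simp only at he
    have hfeq : f i = f i' := by
      rcases lt_trichotomy (f i) (f i') with h | h | h
      · exfalso
        have h1 : S (f i) + r i < S (f i + 1) := by
          have := hrlt i hi; rw [hsucc]; omega
        have h2 : S (f i + 1) ≤ S (f i') := hSmono h
        omega
      · exact h
      · exfalso
        have h1 : S (f i') + r i' < S (f i' + 1) := by
          have := hrlt i' hi'; rw [hsucc]; omega
        have h2 : S (f i' + 1) ≤ S (f i) := hSmono h
        omega
    have hre : r i = r i' := by rw [hfeq] at he; omega
    rcases lt_trichotomy i i' with h | h | h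
    · exact absurd (hrkey i i' hi hfeq h) (by omega)
    · exact h
    · exact absurd (hrkey i' i hi' hfeq.symm h) (by omega)
  · apply strictMono_nat_of_lt_succ
    intro k
    have := hSmono (show k + 1 ≤ k + 1 + 1 by omega)
    omega
  · intro i
    show S (f i) + r i ≤ S (f i + 1) + f i
    have h1 := hrC i
    have h2 := hsucc (f i)
    omega

theorem stmt_2 (α : Ultrafilter ℕ) (hα : (α : Filter ℕ) ≤ Filter.cofinite)
    (f : ℕ → ℕ) :
    List.TFAE
      [AlphaFiniteToOne α f,
       ∃ g : ℕ → ℕ, AlphaInjective α g ∧ LL g f,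
       ∃ g h : ℕ → ℕ, AlphaInjective α g ∧ ∀ i, g i ≤ h (f i),
       ∃ g h : ℕ → ℕ, AlphaInjective α g ∧ StrictMono h ∧
         ∀ n : ℕ, g ⁻¹' {m | h n ≤ m} ⊆ f ⁻¹' {m | n ≤ m}] := by
  tfae_have 1 → 2 := by
    rintro ⟨A, hAα, hA⟩
    obtain ⟨g, hginj, hLL⟩ := aux_one_two hA
    exact ⟨g, ⟨A, hAα, hginj⟩, hLL⟩
  tfae_have 2 → 3 := by
    rintro ⟨g, hg, h, _, hle⟩
    exact ⟨g, h, hg, hle⟩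
  tfae_have 3 → 1 := by
    rintro ⟨g, h, ⟨A, hAα, hginj⟩, hle⟩
    refine ⟨A, hAα, fun k => ?_⟩
    apply Set.Finite.of_finite_image _ (hginj.mono Set.inter_subset_left)
    apply (Set.finite_Iic (h k)).subset
    rintro _ ⟨i, ⟨_, hfi⟩, rfl⟩
    have : f i = k := hfi
    simpa [Set.mem_Iic, ← this] using hle i
  tfae_have 2 → 4 := by
    rintro ⟨g, hg, h, hmono, hle⟩
    refine ⟨g, h, hg, hmono, fun n i hi => ?_⟩
    have : h n ≤ h (f i) := le_trans hi (hle i)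
    exact hmono.le_iff_le.mp this
  tfae_have 4 → 3 := by
    rintro ⟨g, h, hg, hmono, hsub⟩
    refine ⟨g, fun k => h (k + 1), hg, fun i => ?_⟩
    by_contra hcon
    push_neg at hcon
    have : f i + 1 ≤ f i := hsub (f i + 1) (le_of_lt hcon)
    omega
  tfae_finish
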